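/- Let n = 2q with q ≥ 1, let l = 2u be even with u ≥ 1, let c, V be real numbers, and let a : ℕ → ℝ satisfy a(0) = V and a(r+2) = c(n−r)(l+r)/((r+1)(r+2)) · a(r) for every even r with 0 ≤ r ≤ n−2. Then for every integer s with 0 ≤ 2s ≤ n, a(2s) = (2^{2s} (s!)^2 / (2s)!) · C(u+s−1, s) · C(q, s) · c^s · V, where C(·,·) denotes the binomial coefficient. (This is the closed form, in the case n and l both even, obtained by induction from the recurrence S_{r+2}^T = c(n−r)(l+r)/((r+1)(r+2)) S_r^T for the total mean curvatures of a distribution of dimension n orthogonal to a totally geodesic foliation of dimension l on a closed manifold of constant curvature c, with V the volume of the manifold.) -/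

import Mathlib

open scoped BigOperators

/-- the closed form for the total mean curvatures when `n = 2q`
and `l = 2u` are both even, obtained by induction from the recurrence
`a(r+2) = c(n−r)(l+r)/((r+1)(r+2)) · a(r)` with `a(0) = V`:
`a(2s) = (2^{2s}(s!)²/(2s)!) · C(u+s−1, s) · C(q, s) · c^s · V`. -/
theorem stmt11 (n l q u : ℕ) (hq : 1 ≤ q) (hu : 1 ≤ u) (hn : n = 2 * q) (hl : l = 2 * u)
    (c V : ℝ) (a : ℕ → ℝ) (h0 : a 0 = V)
    (hrec : ∀ r : ℕ, Even r → r ≤ n - 2 →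
      a (r + 2) = c * ((n : ℝ) - (r : ℝ)) * ((l : ℝ) + (r : ℝ)) /
        (((r : ℝ) + 1) * ((r : ℝ) + 2)) * a r) :
    ∀ s : ℕ, 2 * s ≤ n →
      a (2 * s) = ((2 : ℝ) ^ (2 * s) * (Nat.factorial s : ℝ) ^ 2 /
          (Nat.factorial (2 * s) : ℝ)) *
        ((u + s - 1).choose s : ℝ) * (q.choose s : ℝ) * c ^ s * V := by
  subst hn hl
  intro s
  induction s with
  | zero => intro _; simpa using h0
  | succ s ih =>
    intro hs
    have hsq : s + 1 ≤ q := by omega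
    have ha := ih (by omega)
    have hr := hrec (2 * s) ⟨s, by ring⟩ (by omega)
    have h2 : 2 * (s + 1) = 2 * s + 2 := by ring
    rw [h2, hr, ha]
    -- binomial identities
    have hA : (((u + s).choose (s + 1) : ℕ) : ℝ) * ((s : ℝ) + 1)
        = ((u : ℝ) + s) * ((u + s - 1).choose s : ℝ) := by
      have h1 : u + s - 1 + 1 = u + s := by omega
      have hNat : (u + s).choose (s + 1) * (s + 1) = (u + s) * (u + s - 1).choose s := by
        have := Nat.add_one_mul_choose_eq (u + s - 1) s
        simp only [Nat.succ_eq_add_one, h1] at this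
        omega
      have := congrArg (Nat.cast (R := ℝ)) hNat
      push_cast at this
      linarith
    have hB : (q.choose (s + 1) : ℝ) * ((s : ℝ) + 1) = ((q : ℝ) - s) * (q.choose s : ℝ) := by
      have := congrArg (Nat.cast (R := ℝ)) (Nat.choose_succ_right_eq q s)
      push_cast [Nat.cast_sub (by omega : s ≤ q)] at this
      linarith
    have hAB : (((u + s).choose (s + 1) : ℕ) : ℝ) * ((s : ℝ) + 1) *
          ((q.choose (s + 1) : ℝ) * ((s : ℝ) + 1))
        = ((u : ℝ) + s) * ((u + s - 1).choose s : ℝ) *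
          (((q : ℝ) - s) * (q.choose s : ℝ)) := by rw [hA, hB]
    -- factorials
    have hF1 : ((2 * s + 2).factorial : ℝ)
        = (2 * (s : ℝ) + 2) * ((2 * (s : ℝ) + 1) * ((2 * s).factorial : ℝ)) := by
      have h3 : 2 * s + 2 = (2 * s + 1) + 1 := by ring
      rw [h3, Nat.factorial_succ, Nat.factorial_succ]
      push_cast; ring
    have hF2 : ((s + 1).factorial : ℝ) = ((s : ℝ) + 1) * (s.factorial : ℝ) := by
      rw [Nat.factorial_succ]; push_cast; ring
    have hne1 : ((2 * s).factorial : ℝ) ≠ 0 := by positivity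
    have hne4 : (s.factorial : ℝ) ≠ 0 := by positivity
    rw [hF1, hF2]
    push_cast
    have hne2 : (2 : ℝ) * s + 1 ≠ 0 := by positivity
    have hne3 : (2 : ℝ) * s + 2 ≠ 0 := by positivity
    rw [show u + (s + 1) - 1 = u + s by omega]
    field_simp
    linear_combination (-4 * 2 ^ (2 * s) * c ^ (s + 1) * V) * hAB
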